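/- For the Gaussian kernel k(x,y) = exp(-‖x-y‖²/(2σ²)) (so κ = 1, φ(s) = e^{-s}, p = 2), if every quantized point satisfies ‖xᵢ - c_{α(i)}‖ ≤ σ/ℓ, then the MMD between the samples and their quantized versions satisfies MMD ≤ √(2(1 - exp(-1/(2ℓ²)))), and this bound tends to 0 as ℓ → ∞. -/

import Mathlib

/-- Specialization of the MMD worst-case bound to the Gaussian kernel, and the
vanishing of the bound as ℓ → ∞. -/
theorem gaussian_mmd_quantization_bound (d n : ℕ) (σ : ℝ) (hσ : 0 < σ)
    {H : Type*} [NormedAddCommGroup H] [InnerProductSpace ℝ H]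
    (k : EuclideanSpace ℝ (Fin d) → EuclideanSpace ℝ (Fin d) → ℝ)
    (hk : ∀ x y, k x y = Real.exp (-‖x - y‖ ^ 2 / (2 * σ ^ 2)))
    (ψ : EuclideanSpace ℝ (Fin d) → H)
    (hrepr : ∀ x y, inner ℝ (ψ x) (ψ y) = k x y) :
    (∀ (ℓ : ℝ), 0 < ℓ →
      ∀ (x c : Fin n → EuclideanSpace ℝ (Fin d)),
        (∀ i, ‖x i - c i‖ ≤ σ / ℓ) →
        ‖(1 / (n : ℝ)) • ∑ i, ψ (x i) - (1 / (n : ℝ)) • ∑ i, ψ (c i)‖ ≤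
          Real.sqrt (2 * (1 - Real.exp (-1 / (2 * ℓ ^ 2))))) ∧
    Filter.Tendsto (fun ℓ : ℝ => Real.sqrt (2 * (1 - Real.exp (-1 / (2 * ℓ ^ 2)))))
      Filter.atTop (nhds 0) := by
  constructor
  · intro ℓ hℓ x c hxc
    set B : ℝ := 2 * (1 - Real.exp (-1 / (2 * ℓ ^ 2))) with hB
    have hBnn : 0 ≤ B := by
      have : Real.exp (-1 / (2 * ℓ ^ 2)) ≤ 1 := by
        apply Real.exp_le_one_iff.2
        have : (0:ℝ) < 2 * ℓ ^ 2 := by positivity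
        have := div_nonneg (le_of_lt one_pos) this.le
        simp only [neg_div]
        linarith
      nlinarith
    -- pointwise bound on ‖ψ (x i) - ψ (c i)‖
    have key : ∀ i, ‖ψ (x i) - ψ (c i)‖ ≤ Real.sqrt B := by
      intro i
      have hnormsq : ‖ψ (x i) - ψ (c i)‖ ^ 2 =
          k (x i) (x i) + k (c i) (c i) - 2 * k (x i) (c i) := by
        have h0 := @norm_sub_sq_real H _ _ (ψ (x i)) (ψ (c i))
        have hx : ‖ψ (x i)‖ ^ 2 = k (x i) (x i) := by
          rw [← hrepr]; exact (real_inner_self_eq_norm_sq _).symm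
        have hc : ‖ψ (c i)‖ ^ 2 = k (c i) (c i) := by
          rw [← hrepr]; exact (real_inner_self_eq_norm_sq _).symm
        rw [h0, hx, hc, hrepr]; ring
      have hself : ∀ y : EuclideanSpace ℝ (Fin d), k y y = 1 := by
        intro y; rw [hk]; simp
      have hcross : Real.exp (-1 / (2 * ℓ ^ 2)) ≤ k (x i) (c i) := by
        rw [hk]
        apply Real.exp_le_exp.2
        rw [div_le_div_iff₀ (by positivity) (by positivity)]
        have h1 : ‖x i - c i‖ ≤ σ / ℓ := hxc i
        have h2 : ‖x i - c i‖ ^ 2 ≤ (σ / ℓ) ^ 2 := by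
          apply sq_le_sq' _ h1
          have := norm_nonneg (x i - c i)
          nlinarith [div_nonneg hσ.le hℓ.le]
        have h3 : (σ / ℓ) ^ 2 = σ ^ 2 / ℓ ^ 2 := by ring
        rw [h3] at h2
        have hℓ2 : (0:ℝ) < ℓ ^ 2 := by positivity
        have h4 : ‖x i - c i‖ ^ 2 * ℓ ^ 2 ≤ σ ^ 2 := (le_div_iff₀ hℓ2).1 h2
        nlinarith
      have hsq : ‖ψ (x i) - ψ (c i)‖ ^ 2 ≤ B := by
        rw [hnormsq, hself, hself, hB]
        nlinarith
      calc ‖ψ (x i) - ψ (c i)‖ = Real.sqrt (‖ψ (x i) - ψ (c i)‖ ^ 2) := by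
            rw [Real.sqrt_sq (norm_nonneg _)]
        _ ≤ Real.sqrt B := Real.sqrt_le_sqrt hsq
    rcases Nat.eq_zero_or_pos n with hn | hn
    · subst hn
      simp [Real.sqrt_nonneg]
    · have hnpos : (0:ℝ) < n := by exact_mod_cast hn
      rw [← smul_sub, ← Finset.sum_sub_distrib]
      calc ‖(1 / (n:ℝ)) • ∑ i, (ψ (x i) - ψ (c i))‖
          = (1 / (n:ℝ)) * ‖∑ i, (ψ (x i) - ψ (c i))‖ := by
            rw [norm_smul]; simp [abs_of_pos (by positivity : (0:ℝ) < 1/(n:ℝ))]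
        _ ≤ (1 / (n:ℝ)) * ∑ i, ‖ψ (x i) - ψ (c i)‖ := by
            apply mul_le_mul_of_nonneg_left (norm_sum_le _ _) (by positivity)
        _ ≤ (1 / (n:ℝ)) * ∑ _i : Fin n, Real.sqrt B := by
            apply mul_le_mul_of_nonneg_left _ (by positivity)
            exact Finset.sum_le_sum fun i _ => key i
        _ = Real.sqrt B := by
            simp [Finset.sum_const]
            field_simp
  · have h1 : Filter.Tendsto (fun ℓ : ℝ => -1 / (2 * ℓ ^ 2)) Filter.atTop (nhds 0) := by
      have h2 : Filter.Tendsto (fun ℓ : ℝ => 2 * ℓ ^ 2) Filter.atTop Filter.atTop := by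
        apply Filter.Tendsto.const_mul_atTop (by norm_num)
        simpa [sq] using Filter.Tendsto.atTop_mul_atTop₀
          (Filter.tendsto_id (α := ℝ)) Filter.tendsto_id
      have := (tendsto_inv_atTop_zero.comp h2).neg
      simpa [neg_div, div_eq_mul_inv] using this
    have h2 := (Real.continuous_exp.tendsto 0).comp h1
    simp only [Function.comp_def, Real.exp_zero] at h2
    have h3 : Filter.Tendsto (fun ℓ : ℝ => 2 * (1 - Real.exp (-1 / (2 * ℓ ^ 2))))
        Filter.atTop (nhds 0) := by
      have hs : Filter.Tendsto (fun ℓ : ℝ => 1 - Real.exp (-1 / (2 * ℓ ^ 2)))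
          Filter.atTop (nhds (1 - 1)) := Filter.Tendsto.sub tendsto_const_nhds h2
      have := hs.const_mul (2:ℝ)
      simpa using this
    have h4 := (Real.continuous_sqrt.tendsto 0).comp h3
    rw [Real.sqrt_zero] at h4
    exact h4
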